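/- Conversely, let X ⊆ V(G)∖Z with |X| ≤ k be such that (G∖X,Λ) has a consistent labeling λ with λ|_Z = φ. Then X is a solution of the Multiway Cut instance (G',T,k): in G'∖X, no two distinct terminals g₁, g₂ ∈ T lie in the same connected component. -/

import Mathlib

/-- Adjacency of the Multiway Cut graph `G'` built from an untangled instance and a
fixed labeling `φ` on `Z`. -/
def mcAdj {V Γ : Type*} [Group Γ] (Arc : V → V → Prop) (Λ : V → V → Γ)
    (Z : Set V) (φ : V → Γ) : (V ⊕ Γ) → (V ⊕ Γ) → Prop
  | Sum.inl u, Sum.inl w => u ∉ Z ∧ w ∉ Z ∧ Arc u w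
  | Sum.inl v, Sum.inr g => v ∉ Z ∧ ∃ u ∈ Z, Arc u v ∧ φ u * Λ u v = g
  | Sum.inr g, Sum.inl v => v ∉ Z ∧ ∃ u ∈ Z, Arc u v ∧ φ u * Λ u v = g
  | Sum.inr _, Sum.inr _ => False

/-- Reachability from `a` to `b` in `G'` after removing the vertex set `X`. -/
def mcReach {V Γ : Type*} [Group Γ] (Arc : V → V → Prop) (Λ : V → V → Γ)
    (Z : Set V) (φ : V → Γ) (X : Finset V) (a b : V ⊕ Γ) : Prop :=
  ∃ l : List (V ⊕ Γ), l.Chain' (mcAdj Arc Λ Z φ) ∧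
    l.head? = some a ∧ l.getLast? = some b ∧ ∀ x ∈ X, Sum.inl x ∉ l

/-- Terminals of the Multiway Cut instance. -/
def mcTerminals {V Γ : Type*} [Group Γ] (Arc : V → V → Prop) (Λ : V → V → Γ)
    (Z : Set V) (φ : V → Γ) : Set Γ :=
  {g : Γ | ∃ u v, u ∈ Z ∧ v ∉ Z ∧ Arc u v ∧ φ u * Λ u v = g}

/-- Converse direction of the reduction: if `(G∖X,Λ)` has a consistent labeling
extending `φ`, then `X` separates every pair of distinct terminals in `G'`. -/
theorem consistent_labeling_gives_multiway_cut {V Γ : Type*}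
    [Fintype V] [DecidableEq V] [Group Γ]
    (Arc : V → V → Prop) (Λ : V → V → Γ)
    (hsymm : ∀ u v, Arc u v → Arc v u)
    (hlab : ∀ u v, Arc u v → Λ u v = (Λ v u)⁻¹)
    (Z : Set V)
    (huntangled : ∀ u v, Arc u v → u ∉ Z → v ∉ Z → Λ u v = 1)
    (φ : V → Γ)
    (hφ : ∀ u v, u ∈ Z → v ∈ Z → Arc u v → φ v = φ u * Λ u v)
    (k : ℕ) (X : Finset V) (hXZ : ∀ x ∈ X, x ∉ Z) (hXk : X.card ≤ k)
    (lam : V → Γ)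
    (hlamZ : ∀ z ∈ Z, lam z = φ z)
    (hcons : ∀ u v, Arc u v → u ∉ X → v ∉ X → lam v = lam u * Λ u v) :
    ∀ g₁ ∈ mcTerminals Arc Λ Z φ, ∀ g₂ ∈ mcTerminals Arc Λ Z φ, g₁ ≠ g₂ →
      ¬ mcReach Arc Λ Z φ X (Sum.inr g₁) (Sum.inr g₂) := by
  rintro g₁ hg₁ g₂ hg₂ hne ⟨l, hchain, hhead, hlast, hXl⟩
  set Q : (V ⊕ Γ) → Prop := Sum.elim (fun v => lam v = g₁) (fun g => g = g₁) with hQ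
  have step : ∀ a b, mcAdj Arc Λ Z φ a b → (∀ v, a = Sum.inl v → v ∉ X) →
      (∀ v, b = Sum.inl v → v ∉ X) → Q a → Q b := by
    rintro (u | g) (w | g') hadj hA hB hQa
    · obtain ⟨huZ, hwZ, harc⟩ := hadj
      have : lam w = lam u * Λ u w :=
        hcons u w harc (hA u rfl) (hB w rfl)
      simp only [hQ, Sum.elim_inl] at hQa ⊢
      rw [this, huntangled u w harc huZ hwZ, mul_one, hQa]
    · obtain ⟨huZ', z, hzZ, harc, hval⟩ := hadj
      have hzX : z ∉ X := fun h => hXZ z h hzZ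
      have : lam u = lam z * Λ z u := hcons z u harc hzX (hA u rfl)
      simp only [hQ, Sum.elim_inl, Sum.elim_inr] at hQa ⊢
      rw [← hval, ← hlamZ z hzZ, ← this, hQa]
    · obtain ⟨hwZ, u, huZ, harc, hval⟩ := hadj
      have huX : u ∉ X := fun h => hXZ u h huZ
      have : lam w = lam u * Λ u w := hcons u w harc huX (hB w rfl)
      simp only [hQ, Sum.elim_inl, Sum.elim_inr] at hQa ⊢
      rw [this, hlamZ u huZ, hval, hQa]
    · exact hadj.elim
  have main : ∀ l : List (V ⊕ Γ), l.Chain' (mcAdj Arc Λ Z φ) →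
      (∀ x ∈ X, Sum.inl x ∉ l) → ∀ a, l.head? = some a → Q a →
      ∀ b, l.getLast? = some b → Q b := by
    intro l
    induction l with
    | nil => intro _ _ a ha; simp at ha
    | cons c l' ih =>
      intro hch hX a ha hQa b hb
      simp only [List.head?_cons, Option.some.injEq] at ha
      subst ha
      cases l' with
      | nil =>
        simp only [List.getLast?_singleton, Option.some.injEq] at hb
        subst hb; exact hQa
      | cons d l'' =>
        obtain ⟨hcd, hch'⟩ := List.isChain_cons_cons.mp hch
        have hX' : ∀ x ∈ X, Sum.inl x ∉ d :: l'' := fun x hx hmem =>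
          hX x hx (List.mem_cons_of_mem _ hmem)
        have hQd : Q d := by
          refine step c d hcd ?_ ?_ hQa
          · rintro v rfl hv
            exact hX v hv List.mem_cons_self
          · rintro v rfl hv
            exact hX' v hv List.mem_cons_self
        have hb' : (d :: l'').getLast? = some b := by
          rwa [List.getLast?_cons_cons] at hb
        exact ih hch' hX' d rfl hQd b hb'
  have h1 : Q (Sum.inr g₁) := rfl
  have h2 : Q (Sum.inr g₂) := main l hchain hXl _ hhead h1 _ hlast
  exact hne ((by simpa [hQ] using h2) : g₂ = g₁).symm
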